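/- Let d ≥ 3, 0 < ρ < 1/4, and let Λ ⊆ S^{d−1} ∩ ℚ^d be a finite set of rational unit directions. Then there exists μ₀ > 0 and vectors {v_ξ}_{ξ∈Λ} ⊆ ℝ^d such that for every μ ≥ μ₀ the periodized cylinders v_ξ + B_{2ρμ^{-1}} + ℝξ + ℤ^d are pairwise disjoint as ξ varies in Λ. -/
import Mathlib

open MeasureTheory

section Aux

lemma rat_mul_den_int (q : ℚ) (M : ℕ) (h : q.den ∣ M) : ∃ z : ℤ, (z : ℚ) = q * M := by
  obtain ⟨k, hk⟩ := h
  refine ⟨q.num * k, ?_⟩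
  have h1 : (q.den : ℚ) ≠ 0 := by exact_mod_cast q.den_nz
  have h2 : (q.num : ℚ) = q * q.den := by
    rw [Rat.mul_den_eq_num]
  push_cast [hk, h2]; ring

lemma exists_int_kernel (d : ℕ) (hd : 3 ≤ d) (q q' : Fin d → ℚ) :
    ∃ c : Fin d → ℤ, c ≠ 0 ∧ (∑ i, (c i : ℚ) * q i) = 0 ∧ (∑ i, (c i : ℚ) * q' i) = 0 := by
  classical
  set f1 : (Fin d → ℚ) →ₗ[ℚ] ℚ := ∑ i, q i • LinearMap.proj i with hf1
  set f2 : (Fin d → ℚ) →ₗ[ℚ] ℚ := ∑ i, q' i • LinearMap.proj i with hf2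
  set f := f1.prod f2 with hf
  have hker : LinearMap.ker f ≠ ⊥ := by
    intro hbot
    have hinj : Function.Injective f := LinearMap.ker_eq_bot.1 hbot
    have := LinearMap.finrank_le_finrank_of_injective hinj
    simp [Module.finrank_pi, Module.finrank_prod] at this
    omega
  obtain ⟨c₀, hc₀mem, hc₀⟩ := Submodule.ne_bot_iff _ |>.1 hker
  have hc₀1 : (∑ i, c₀ i * q i) = 0 ∧ (∑ i, c₀ i * q' i) = 0 := by
    have := hc₀mem
    rw [LinearMap.mem_ker] at this
    rw [hf, LinearMap.prod_apply] at this
    have h1 := congrArg Prod.fst this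
    have h2 := congrArg Prod.snd this
    simp [hf1, hf2, LinearMap.sum_apply] at h1 h2
    constructor
    · rw [← h1]; exact Finset.sum_congr rfl fun i _ => mul_comm _ _
    · rw [← h2]; exact Finset.sum_congr rfl fun i _ => mul_comm _ _
  set M : ℕ := ∏ i, (c₀ i).den with hM
  have hMden : ∀ i, (c₀ i).den ∣ M := fun i => Finset.dvd_prod_of_mem _ (Finset.mem_univ i)
  have hMpos : 0 < M := Finset.prod_pos (fun i _ => (c₀ i).pos)
  choose z hz using fun i => rat_mul_den_int (c₀ i) M (hMden i)
  refine ⟨z, ?_, ?_, ?_⟩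
  · intro hzz
    apply hc₀
    funext i
    have : (z i : ℚ) = 0 := by rw [hzz]; simp
    rw [hz i] at this
    have hM0 : (M : ℚ) ≠ 0 := by positivity
    have := mul_eq_zero.1 this
    simpa [hM0] using this
  · have : ∑ i, (z i : ℚ) * q i = M * ∑ i, c₀ i * q i := by
      rw [Finset.mul_sum]
      exact Finset.sum_congr rfl fun i _ => by rw [hz i]; ring
    rw [this, hc₀1.1, mul_zero]
  · have : ∑ i, (z i : ℚ) * q' i = M * ∑ i, c₀ i * q' i := by
      rw [Finset.mul_sum]
      exact Finset.sum_congr rfl fun i _ => by rw [hz i]; ring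
    rw [this, hc₀1.2, mul_zero]

noncomputable def phiL (d : ℕ) (c : Fin d → ℤ) : EuclideanSpace ℝ (Fin d) →ₗ[ℝ] ℝ :=
  ∑ i, (c i : ℝ) • ((LinearMap.proj i).comp (WithLp.linearEquiv 2 ℝ (Fin d → ℝ)).toLinearMap)

lemma phiL_apply (d : ℕ) (c : Fin d → ℤ) (x : EuclideanSpace ℝ (Fin d)) :
    phiL d c x = ∑ i, (c i : ℝ) * x i := by
  simp [phiL, LinearMap.sum_apply]

lemma phiL_ne_zero (d : ℕ) (c : Fin d → ℤ) (hc : c ≠ 0) : phiL d c ≠ 0 := by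
  obtain ⟨i, hi⟩ : ∃ i, c i ≠ 0 := by
    by_contra h; push_neg at h; exact hc (funext h)
  intro h
  have := congrFun (congrArg DFunLike.coe h) (EuclideanSpace.single i 1)
  rw [phiL_apply] at this
  simp [EuclideanSpace.single_apply] at this
  exact hi this

lemma preimage_countable_null {E : Type*} [NormedAddCommGroup E] [NormedSpace ℝ E]
    [MeasurableSpace E] [BorelSpace E] [FiniteDimensional ℝ E] (μ : Measure E)
    [μ.IsAddHaarMeasure] (L : E →ₗ[ℝ] ℝ) (hL : L ≠ 0) {T : Set ℝ} (hT : T.Countable) :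
    μ (L ⁻¹' T) = 0 := by
  have : L ⁻¹' T = ⋃ t ∈ T, L ⁻¹' {t} := by ext w; simp
  rw [this, measure_biUnion_null_iff hT]
  intro t _
  obtain ⟨u, hu⟩ : ∃ u, L u ≠ 0 := by
    by_contra h; push_neg at h; exact hL (LinearMap.ext fun w => by simp [h w])
  set w₀ := (t / L u) • u with hw₀
  have hLw₀ : L w₀ = t := by
    rw [hw₀, LinearMap.map_smul, smul_eq_mul, div_mul_cancel₀ _ hu]
  have hset : L ⁻¹' {t} = (fun w => w + (-w₀)) ⁻¹' (LinearMap.ker L : Set E) := by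
    ext w
    simp only [Set.mem_preimage, Set.mem_singleton_iff, SetLike.mem_coe, LinearMap.mem_ker,
      map_add, map_neg, hLw₀]
    constructor
    · intro h; rw [h]; ring
    · intro h; linarith
  rw [hset, measure_preimage_add_right]
  apply Measure.addHaar_submodule
  intro htop
  rcases LinearMap.ker_eq_top.1 htop with rfl
  exact hL rfl

lemma exists_shifts (d : ℕ) (c : EuclideanSpace ℝ (Fin d) → EuclideanSpace ℝ (Fin d) → Fin d → ℤ)
    (hc : ∀ ξ ξ', c ξ ξ' ≠ 0) (Λ : Finset (EuclideanSpace ℝ (Fin d))) :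
    ∃ v : EuclideanSpace ℝ (Fin d) → EuclideanSpace ℝ (Fin d),
      ∀ ξ ∈ Λ, ∀ ξ' ∈ Λ, ξ ≠ ξ' →
        ¬ ∃ k : ℤ, phiL d (c ξ ξ') (v ξ) - phiL d (c ξ ξ') (v ξ') = k := by
  classical
  induction Λ using Finset.induction_on with
  | empty => exact ⟨fun _ => 0, by simp⟩
  | @insert η Λ hη ih =>
    obtain ⟨v, hv⟩ := ih
    -- bad set for the new value at η
    set B : Set (EuclideanSpace ℝ (Fin d)) :=
      ⋃ ξ' ∈ Λ,
        ((phiL d (c η ξ')) ⁻¹' (Set.range (fun k : ℤ => (k : ℝ) + phiL d (c η ξ') (v ξ'))) ∪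
         (phiL d (c ξ' η)) ⁻¹' (Set.range (fun k : ℤ => phiL d (c ξ' η) (v ξ') - (k : ℝ)))) with hB
    have hBnull : volume B = 0 := by
      rw [hB, ← Finset.set_biUnion_coe, measure_biUnion_null_iff Λ.countable_toSet]
      intro ξ' _
      refine measure_union_null ?_ ?_
      · exact preimage_countable_null volume _ (phiL_ne_zero d _ (hc η ξ'))
          (Set.countable_range _)
      · exact preimage_countable_null volume _ (phiL_ne_zero d _ (hc ξ' η))
          (Set.countable_range _)
    obtain ⟨x, hx⟩ : ∃ x, x ∉ B := by
      by_contra h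
      push_neg at h
      have : (Set.univ : Set (EuclideanSpace ℝ (Fin d))) ⊆ B := fun x _ => h x
      have h1 : volume (Set.univ : Set (EuclideanSpace ℝ (Fin d))) = 0 :=
        measure_mono_null this hBnull
      have h2 : (0:ENNReal) < volume (Set.univ : Set (EuclideanSpace ℝ (Fin d))) :=
        isOpen_univ.measure_pos volume ⟨0, trivial⟩
      rw [h1] at h2
      exact lt_irrefl _ h2
    refine ⟨Function.update v η x, ?_⟩
    intro ξ hξ ξ' hξ' hne
    rw [Finset.mem_insert] at hξ hξ'
    rcases hξ with rfl | hξ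
    · rcases hξ' with rfl | hξ'
      · exact absurd rfl hne
      · have h1 : Function.update v ξ x ξ = x := Function.update_self _ _ _
        have h2 : Function.update v ξ x ξ' = v ξ' := by
          apply Function.update_of_ne
          intro h; exact hη (h ▸ hξ')
        rw [h1, h2]
        rintro ⟨k, hk⟩
        apply hx
        rw [hB]
        refine Set.mem_biUnion hξ' (Or.inl ?_)
        refine ⟨k, ?_⟩
        simp only []
        linarith
    · rcases hξ' with rfl | hξ'
      · have h1 : Function.update v ξ' x ξ' = x := Function.update_self _ _ _
        have h2 : Function.update v ξ' x ξ = v ξ := by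
          apply Function.update_of_ne
          intro h; exact hη (h ▸ hξ)
        rw [h1, h2]
        rintro ⟨k, hk⟩
        apply hx
        rw [hB]
        refine Set.mem_biUnion hξ (Or.inr ?_)
        refine ⟨k, ?_⟩
        simp only []
        linarith
      · have h1 : Function.update v η x ξ = v ξ := by
          apply Function.update_of_ne; intro h; exact hη (h ▸ hξ)
        have h2 : Function.update v η x ξ' = v ξ' := by
          apply Function.update_of_ne; intro h; exact hη (h ▸ hξ')
        rw [h1, h2]
        exact hv ξ hξ ξ' hξ' hne

lemma int_gap (r : ℝ) (hr : ¬∃ k : ℤ, r = k) :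
    ∃ δ : ℝ, 0 < δ ∧ ∀ k : ℤ, δ ≤ |r - k| := by
  refine ⟨min (Int.fract r) (1 - Int.fract r), ?_, ?_⟩
  · refine lt_min ?_ (by linarith [Int.fract_lt_one r])
    rcases eq_or_lt_of_le (Int.fract_nonneg r) with h | h
    · exfalso
      apply hr
      exact ⟨⌊r⌋, by have := Int.fract_add_floor r; rw [← h] at this; linarith⟩
    · exact h
  · intro k
    have hfr : Int.fract r = r - ⌊r⌋ := rfl
    rcases le_or_gt (k : ℝ) (⌊r⌋ : ℝ) with h | h
    · have : r - k ≥ Int.fract r := by rw [hfr]; linarith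
      rw [abs_of_nonneg (by linarith [Int.fract_nonneg r] : (0:ℝ) ≤ r - k)]
      exact le_trans (min_le_left _ _) this
    · have hk : (⌊r⌋ : ℝ) + 1 ≤ k := by exact_mod_cast Int.lt_iff_add_one_le.1 (by exact_mod_cast h)
      have : (k : ℝ) - r ≥ 1 - Int.fract r := by rw [hfr]; linarith
      rw [abs_sub_comm, abs_of_nonneg (by linarith [Int.fract_lt_one r, hfr] : (0:ℝ) ≤ (k:ℝ) - r)]
      exact le_trans (min_le_right _ _) this

lemma coord_abs_le_norm (d : ℕ) (b : EuclideanSpace ℝ (Fin d)) (i : Fin d) : |b i| ≤ ‖b‖ := by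
  rw [EuclideanSpace.norm_eq]
  have h1 : |b i| = Real.sqrt (‖b i‖^2) := by
    rw [Real.sqrt_sq_eq_abs]; simp
  rw [h1]
  apply Real.sqrt_le_sqrt
  exact Finset.single_le_sum (f := fun j => ‖b j‖^2) (fun j _ => sq_nonneg _) (Finset.mem_univ i)

end Aux

/-- Disjoint periodized cylinders: for `d ≥ 3`, `0 < ρ < 1/4` and a finite set `Λ` of
rational unit directions, there are `μ₀ > 0` and shifts `v_ξ` such that for all `μ ≥ μ₀`
the periodized cylinders `v_ξ + B_{2ρ/μ} + ℝξ + ℤ^d`, `ξ ∈ Λ`, are pairwise disjoint. -/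
theorem disjoint_periodized_cylinders (d : ℕ) (hd : 3 ≤ d) (ρ : ℝ)
    (hρ0 : 0 < ρ) (hρ : ρ < 1 / 4)
    (Λ : Finset (EuclideanSpace ℝ (Fin d)))
    (hΛ : ∀ ξ ∈ Λ, ‖ξ‖ = 1 ∧ ∀ i, ∃ q : ℚ, ξ i = (q : ℝ)) :
    ∃ μ₀ : ℝ, 0 < μ₀ ∧ ∃ v : EuclideanSpace ℝ (Fin d) → EuclideanSpace ℝ (Fin d),
      ∀ μ : ℝ, μ₀ ≤ μ → ∀ ξ ∈ Λ, ∀ ξ' ∈ Λ, ξ ≠ ξ' →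
        Disjoint
          {x : EuclideanSpace ℝ (Fin d) | ∃ (t : ℝ) (b : EuclideanSpace ℝ (Fin d))
            (n : Fin d → ℤ), ‖b‖ < 2 * ρ / μ ∧
            x = v ξ + b + t • ξ + (WithLp.equiv 2 (Fin d → ℝ)).symm (fun i => (n i : ℝ))}
          {x : EuclideanSpace ℝ (Fin d) | ∃ (t : ℝ) (b : EuclideanSpace ℝ (Fin d))
            (n : Fin d → ℤ), ‖b‖ < 2 * ρ / μ ∧
            x = v ξ' + b + t • ξ' + (WithLp.equiv 2 (Fin d → ℝ)).symm (fun i => (n i : ℝ))} := by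
  classical
  have hd0 : 0 < d := by omega
  -- choose integer coefficient functionals for each pair
  have hcex : ∀ ξ ξ' : EuclideanSpace ℝ (Fin d), ∃ c : Fin d → ℤ, c ≠ 0 ∧
      ((ξ ∈ Λ ∧ ξ' ∈ Λ) →
        (∑ i, (c i : ℝ) * ξ i) = 0 ∧ (∑ i, (c i : ℝ) * ξ' i) = 0) := by
    intro ξ ξ'
    by_cases h : ξ ∈ Λ ∧ ξ' ∈ Λ
    · choose q hq using (hΛ ξ h.1).2
      choose q' hq' using (hΛ ξ' h.2).2
      obtain ⟨c, hc0, h1, h2⟩ := exists_int_kernel d hd q q'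
      refine ⟨c, hc0, fun _ => ⟨?_, ?_⟩⟩
      · have : ∑ i, (c i : ℝ) * ξ i = ((∑ i, (c i : ℚ) * q i : ℚ) : ℝ) := by
          push_cast
          exact Finset.sum_congr rfl fun i _ => by rw [hq i]
        rw [this, h1]; simp
      · have : ∑ i, (c i : ℝ) * ξ' i = ((∑ i, (c i : ℚ) * q' i : ℚ) : ℝ) := by
          push_cast
          exact Finset.sum_congr rfl fun i _ => by rw [hq' i]
        rw [this, h2]; simp
    · refine ⟨fun _ => 1, ?_, fun hh => absurd hh h⟩
      intro h1
      have := congrFun h1 ⟨0, hd0⟩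
      simp at this
  choose c hc0 hcΛ using hcex
  obtain ⟨v, hv⟩ := exists_shifts d c hc0 Λ
  -- gap δ for each pair
  have hdel : ∀ ξ ξ' : EuclideanSpace ℝ (Fin d), ∃ δ : ℝ, 0 < δ ∧
      ((ξ ∈ Λ ∧ ξ' ∈ Λ ∧ ξ ≠ ξ') →
        ∀ k : ℤ, δ ≤ |phiL d (c ξ ξ') (v ξ) - phiL d (c ξ ξ') (v ξ') - k|) := by
    intro ξ ξ'
    by_cases h : ξ ∈ Λ ∧ ξ' ∈ Λ ∧ ξ ≠ ξ'
    · obtain ⟨δ, hδ0, hδ⟩ := int_gap (phiL d (c ξ ξ') (v ξ) - phiL d (c ξ ξ') (v ξ'))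
        (hv ξ h.1 ξ' h.2.1 h.2.2)
      exact ⟨δ, hδ0, fun _ => hδ⟩
    · exact ⟨1, one_pos, fun hh => absurd hh h⟩
  choose δf hδpos hδ using hdel
  -- size constants
  set C : EuclideanSpace ℝ (Fin d) → EuclideanSpace ℝ (Fin d) → ℝ := fun ξ ξ' => ∑ i, |(c ξ ξ' i : ℝ)| with hC
  have hCnn : ∀ ξ ξ', 0 ≤ C ξ ξ' := fun ξ ξ' =>
    Finset.sum_nonneg fun i _ => abs_nonneg _
  -- threshold
  set μ₀ : ℝ := 1 + ∑ p ∈ Λ ×ˢ Λ, (8 * ρ * (C p.1 p.2 + 1) / δf p.1 p.2) with hμ₀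
  have hterm : ∀ p ∈ Λ ×ˢ Λ, 0 ≤ 8 * ρ * (C p.1 p.2 + 1) / δf p.1 p.2 := by
    intro p _
    have := hCnn p.1 p.2
    have := hδpos p.1 p.2
    positivity
  have hμ₀1 : 1 ≤ μ₀ := by
    rw [hμ₀]
    nlinarith [Finset.sum_nonneg hterm]
  refine ⟨μ₀, by linarith, v, ?_⟩
  intro μ hμ ξ hξ ξ' hξ' hne
  have hμpos : 0 < μ := by linarith
  have hμbig : 8 * ρ * (C ξ ξ' + 1) / δf ξ ξ' ≤ μ := by
    have hmem : (ξ, ξ') ∈ Λ ×ˢ Λ := Finset.mem_product.2 ⟨hξ, hξ'⟩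
    have := Finset.single_le_sum hterm hmem
    calc 8 * ρ * (C ξ ξ' + 1) / δf ξ ξ'
        ≤ ∑ p ∈ Λ ×ˢ Λ, (8 * ρ * (C p.1 p.2 + 1) / δf p.1 p.2) := this
      _ ≤ μ₀ := by rw [hμ₀]; linarith
      _ ≤ μ := hμ
  rw [Set.disjoint_left]
  rintro x ⟨t, b, n, hb, rfl⟩ ⟨t', b', n', hb', hx⟩
  set φ := phiL d (c ξ ξ') with hφ
  have hφeq := congrArg φ hx
  have hξ0 : φ ξ = 0 := by rw [hφ, phiL_apply]; exact (hcΛ ξ ξ' ⟨hξ, hξ'⟩).1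
  have hξ'0 : φ ξ' = 0 := by rw [hφ, phiL_apply]; exact (hcΛ ξ ξ' ⟨hξ, hξ'⟩).2
  have hlat : ∀ m : Fin d → ℤ,
      φ ((WithLp.equiv 2 (Fin d → ℝ)).symm (fun i => (m i : ℝ)))
        = ((∑ i, c ξ ξ' i * m i : ℤ) : ℝ) := by
    intro m
    rw [hφ, phiL_apply]
    push_cast
    rfl
  simp only [map_add, LinearMap.map_smul, smul_eq_mul, hξ0, hξ'0, mul_zero, add_zero,
    hlat n, hlat n'] at hφeq
  -- hφeq : φ (v ξ) + φ b + K = φ (v ξ') + φ b' + K'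
  set r := φ (v ξ) - φ (v ξ') with hr
  have hKey : r - ((∑ i, c ξ ξ' i * n' i : ℤ) - (∑ i, c ξ ξ' i * n i : ℤ) : ℤ)
      = φ b' - φ b := by
    push_cast at hφeq ⊢
    rw [hr]
    linarith
  have hδle := hδ ξ ξ' ⟨hξ, hξ', hne⟩ ((∑ i, c ξ ξ' i * n' i : ℤ) - (∑ i, c ξ ξ' i * n i : ℤ))
  rw [hKey] at hδle
  -- bound |φ b| by C * ‖b‖
  have hφb : ∀ y : EuclideanSpace ℝ (Fin d), |φ y| ≤ C ξ ξ' * ‖y‖ := by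
    intro y
    rw [hφ, phiL_apply, hC]
    calc |∑ i, (c ξ ξ' i : ℝ) * y i| ≤ ∑ i, |(c ξ ξ' i : ℝ) * y i| :=
          Finset.abs_sum_le_sum_abs _ _
      _ ≤ ∑ i, |(c ξ ξ' i : ℝ)| * ‖y‖ := by
          refine Finset.sum_le_sum fun i _ => ?_
          rw [abs_mul]
          exact mul_le_mul_of_nonneg_left (coord_abs_le_norm d y i) (abs_nonneg _)
      _ = (∑ i, |(c ξ ξ' i : ℝ)|) * ‖y‖ := by rw [Finset.sum_mul]
  have hbb : |φ b' - φ b| ≤ C ξ ξ' * (‖b'‖ + ‖b‖) := by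
    calc |φ b' - φ b| ≤ |φ b'| + |φ b| := abs_sub _ _
      _ ≤ C ξ ξ' * ‖b'‖ + C ξ ξ' * ‖b‖ := add_le_add (hφb b') (hφb b)
      _ = C ξ ξ' * (‖b'‖ + ‖b‖) := by ring
  have hnorm : ‖b'‖ + ‖b‖ < 4 * ρ / μ := by
    have : 2 * ρ / μ + 2 * ρ / μ = 4 * ρ / μ := by ring
    linarith
  have hfinal : C ξ ξ' * (‖b'‖ + ‖b‖) < δf ξ ξ' := by
    have h1 : C ξ ξ' * (‖b'‖ + ‖b‖) ≤ (C ξ ξ' + 1) * (4 * ρ / μ) := by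
      have h2 : C ξ ξ' * (‖b'‖ + ‖b‖) ≤ C ξ ξ' * (4 * ρ / μ) :=
        mul_le_mul_of_nonneg_left (le_of_lt hnorm) (hCnn ξ ξ')
      have h3 : C ξ ξ' * (4 * ρ / μ) ≤ (C ξ ξ' + 1) * (4 * ρ / μ) := by
        have : 0 ≤ 4 * ρ / μ := by positivity
        nlinarith
      linarith
    have h4 : (C ξ ξ' + 1) * (4 * ρ / μ) < δf ξ ξ' := by
      have hδp := hδpos ξ ξ'
      have h5 : 8 * ρ * (C ξ ξ' + 1) ≤ μ * δf ξ ξ' := (div_le_iff₀ hδp).1 hμbig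
      have hCp : 0 < C ξ ξ' + 1 := by linarith [hCnn ξ ξ']
      have h6 : (C ξ ξ' + 1) * (4 * ρ / μ) = ((C ξ ξ' + 1) * (4 * ρ)) / μ := by ring
      rw [h6, div_lt_iff₀ hμpos]
      linarith [mul_pos hρ0 hCp]
    linarith
  linarith [hδle, abs_nonneg (φ b' - φ b)]
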